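/- Fix δ ∈ (0,1) and integers 1 ≤ N_P < N_A. Let X_1, …, X_{N_A} be independent standard Gaussians and let X_{(1)} ≥ … ≥ X_{(N_A)} be their decreasing order statistics. Then with probability at least 1 − δ, the average of the N_P largest values satisfies (1/N_P)·Σ_{i=1}^{N_P} X_{(i)} ≤ 3·√(2·log(1/δ)) + 7·√(2·log(e·N_A/N_P)) + π/(2·N_P). -/

import Mathlib

open MeasureTheory ProbabilityTheory Real
open scoped NNReal ENNReal

/-- The `i`-th largest entry (0-indexed: `i = 0` is the largest) of the tuple `v`. -/
noncomputable def orderStatDesc {n : ℕ} (v : Fin n → ℝ) (i : Fin n) : ℝ :=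
  v (Tuple.sort v i.rev)

/-- The average of the `NP` largest entries of a tuple of `NA` reals. -/
noncomputable def topAvg (NA NP : ℕ) (v : Fin NA → ℝ) : ℝ :=
  (1 / (NP : ℝ)) * ∑ i ∈ Finset.univ.filter (fun i : Fin NA => (i : ℕ) < NP),
    orderStatDesc v i

lemma gauss_tail {t : ℝ} (ht : 1 ≤ t) :
    gaussianReal 0 1 (Set.Ioi t) ≤ ENNReal.ofReal (rexp (-(t^2)/2)) := by
  rw [gaussianReal_apply 0 one_ne_zero]
  have hint : IntegrableOn (fun x : ℝ => rexp (-(t^2)/2) * rexp (-(x - t))) (Set.Ioi t) := by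
    have h1 : IntegrableOn (fun x : ℝ => rexp (-1 * x)) (Set.Ioi t) :=
      exp_neg_integrableOn_Ioi t one_pos
    have h2 : IntegrableOn (fun x : ℝ => (rexp (-(t^2)/2) * rexp t) * rexp (-1 * x)) (Set.Ioi t) :=
      h1.const_mul _
    refine h2.congr_fun (fun x _ => ?_) measurableSet_Ioi
    simp only [mul_assoc, ← Real.exp_add]
    congr 1
    ring
  have hb : ∀ x ∈ Set.Ioi t,
      gaussianPDF 0 1 x ≤ ENNReal.ofReal (rexp (-(t^2)/2) * rexp (-(x - t))) := by
    intro x hx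
    rw [gaussianPDF]
    refine ENNReal.ofReal_le_ofReal ?_
    have hpdf : gaussianPDFReal 0 1 x = (√(2 * π))⁻¹ * rexp (-(x^2)/2) := by
      unfold gaussianPDFReal
      norm_num
    rw [hpdf]
    have h2π : (1:ℝ) ≤ √(2 * π) := by
      rw [show (1:ℝ) = √1 by simp]
      exact Real.sqrt_le_sqrt (by nlinarith [Real.pi_gt_three])
    have hx' : t < x := hx
    have hexp : rexp (-(x^2)/2) ≤ rexp (-(t^2)/2) * rexp (-(x - t)) := by
      rw [← Real.exp_add]
      apply Real.exp_le_exp.mpr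
      nlinarith
    calc (√(2 * π))⁻¹ * rexp (-(x^2)/2) ≤ 1 * rexp (-(x^2)/2) :=
          mul_le_mul_of_nonneg_right (inv_le_one_of_one_le₀ h2π) (Real.exp_nonneg _)
      _ ≤ rexp (-(t^2)/2) * rexp (-(x - t)) := by rw [one_mul]; exact hexp
  calc ∫⁻ x in Set.Ioi t, gaussianPDF 0 1 x
      ≤ ∫⁻ x in Set.Ioi t, ENNReal.ofReal (rexp (-(t^2)/2) * rexp (-(x - t))) := by
        refine setLIntegral_mono ?_ hb
        exact (measurable_const.mul ((measurable_id.sub_const t).neg.exp)).ennreal_ofReal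
    _ = ENNReal.ofReal (∫ x in Set.Ioi t, rexp (-(t^2)/2) * rexp (-(x - t))) := by
        rw [ofReal_integral_eq_lintegral_ofReal hint]
        exact Filter.Eventually.of_forall fun x => by positivity
    _ ≤ ENNReal.ofReal (rexp (-(t^2)/2)) := by
        apply ENNReal.ofReal_le_ofReal
        rw [integral_const_mul]
        have hval : ∫ x in Set.Ioi t, rexp (-(x - t)) = 1 := by
          have hfun : ∀ x : ℝ, rexp (-(x - t)) = rexp t * rexp (-x) := fun x => by
            rw [← Real.exp_add]; congr 1; ring
          simp_rw [hfun]
          rw [integral_const_mul, integral_exp_neg_Ioi, ← Real.exp_add]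
          simp
        rw [hval, mul_one]

lemma orderStat_count {n : ℕ} (v : Fin n → ℝ) (t : ℝ) (j : Fin n)
    (h : t < orderStatDesc v j) :
    (j : ℕ) + 1 ≤ (Finset.univ.filter (fun i => t < v i)).card := by
  set σ := Tuple.sort v with hσ
  have hmono : Monotone (v ∘ σ) := Tuple.monotone_sort v
  have hsub : (Finset.Ici j.rev).image σ ⊆ Finset.univ.filter (fun i => t < v i) := by
    intro i hi
    simp only [Finset.mem_image, Finset.mem_Ici] at hi
    obtain ⟨m, hm, rfl⟩ := hi
    simp only [Finset.mem_filter, Finset.mem_univ, true_and]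
    exact lt_of_lt_of_le h (hmono hm)
  have hcard : ((Finset.Ici j.rev).image σ).card = (j : ℕ) + 1 := by
    rw [Finset.card_image_of_injective _ σ.injective, Fin.card_Ici, Fin.val_rev]
    omega
  calc (j:ℕ)+1 = ((Finset.Ici j.rev).image σ).card := hcard.symm
    _ ≤ _ := Finset.card_le_card hsub

lemma sum_log_le : ∀ n : ℕ, ∑ k ∈ Finset.range n, Real.log ((n:ℝ) / (k+1)) ≤ n := by
  intro n
  induction n with
  | zero => simp
  | succ m ih =>
    rcases Nat.eq_zero_or_pos m with hm | hm
    · subst hm; simp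
    have hm' : (0:ℝ) < m := by positivity
    rw [Finset.sum_range_succ]
    have hlast : Real.log ((((m:ℕ)+1 : ℕ):ℝ) / ((m:ℝ)+1)) = 0 := by
      push_cast; rw [div_self (by positivity), Real.log_one]
    have key : ∀ k ∈ Finset.range m,
        Real.log ((((m:ℕ)+1 : ℕ):ℝ) / ((k:ℝ)+1)) =
          Real.log ((m:ℝ)/((k:ℝ)+1)) + Real.log (((m:ℝ)+1)/m) := by
      intro k hk
      rw [← Real.log_mul (by positivity) (by positivity)]
      push_cast
      congr 1
      field_simp
    rw [Finset.sum_congr rfl key, Finset.sum_add_distrib, Finset.sum_const]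
    have hlog : Real.log (((m:ℝ)+1)/m) ≤ 1/m := by
      have := Real.log_le_sub_one_of_pos (x := ((m:ℝ)+1)/m) (by positivity)
      have heq : ((m:ℝ)+1)/m - 1 = 1/m := by field_simp; ring
      linarith [heq ▸ this]
    have hthis : (m:ℕ) • Real.log (((m:ℝ)+1)/m) ≤ 1 := by
      rw [nsmul_eq_mul]
      calc (m:ℝ) * Real.log (((m:ℝ)+1)/m) ≤ (m:ℝ) * (1/m) := by
            apply mul_le_mul_of_nonneg_left hlog (by positivity)
        _ = 1 := by field_simp
    rw [hlast, add_zero]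
    have hcast : ((m+1:ℕ):ℝ) = (m:ℝ)+1 := by push_cast; ring
    rw [hcast, nsmul_eq_mul] at *
    simp only [Finset.card_range] at *
    linarith

lemma pow_le_factorial_mul_exp : ∀ k : ℕ, (k:ℝ)^k ≤ (Nat.factorial k) * rexp 1 ^ k := by
  intro k
  induction k with
  | zero => simp
  | succ m ih =>
    rcases Nat.eq_zero_or_pos m with hm | hm
    · subst hm
      simp only [Nat.factorial, pow_one]
      norm_num
    have hm' : (0:ℝ) < m := by positivity
    have h1 : ((m:ℝ)+1) ≤ (m:ℝ) * rexp (1/m) := by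
      have := Real.add_one_le_exp (1/(m:ℝ))
      calc ((m:ℝ)+1) = (m:ℝ) * (1/m + 1) := by field_simp; ring
        _ ≤ (m:ℝ) * rexp (1/m) := by
            apply mul_le_mul_of_nonneg_left this (by positivity)
    have h2 : ((m:ℝ)+1)^m ≤ (m:ℝ)^m * rexp 1 := by
      calc ((m:ℝ)+1)^m ≤ ((m:ℝ) * rexp (1/m))^m := by
            apply pow_le_pow_left₀ (by positivity) h1
        _ = (m:ℝ)^m * rexp (1/m) ^ m := mul_pow _ _ _
        _ = (m:ℝ)^m * rexp 1 := by
            rw [← Real.exp_nat_mul]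
            congr 2
            field_simp
    have hexp : (0:ℝ) < rexp 1 := Real.exp_pos 1
    push_cast
    calc ((m:ℝ)+1)^(m+1) = ((m:ℝ)+1) * ((m:ℝ)+1)^m := by ring
      _ ≤ ((m:ℝ)+1) * ((m:ℝ)^m * rexp 1) := by
          apply mul_le_mul_of_nonneg_left h2 (by positivity)
      _ ≤ ((m:ℝ)+1) * ((Nat.factorial m * rexp 1 ^ m) * rexp 1) := by
          apply mul_le_mul_of_nonneg_left _ (by positivity)
          apply mul_le_mul_of_nonneg_right ih (le_of_lt hexp)
      _ = (Nat.factorial (m+1)) * rexp 1 ^ (m+1) := by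
          rw [Nat.factorial_succ]
          push_cast
          ring

lemma count_ge_subset {Ω : Type*} {n : ℕ} (X : Fin n → Ω → ℝ) (t : ℝ) (k : ℕ) :
    {ω | k ≤ (Finset.univ.filter (fun i => t < X i ω)).card} ⊆
      ⋃ S ∈ Finset.powersetCard k (Finset.univ : Finset (Fin n)),
        ⋂ i ∈ S, X i ⁻¹' Set.Ioi t := by
  intro ω hω
  obtain ⟨S, hSsub, hScard⟩ := Finset.exists_subset_card_eq hω
  refine Set.mem_biUnion (Finset.mem_powersetCard.mpr ⟨Finset.subset_univ S, hScard⟩) ?_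
  exact Set.mem_biInter fun i hi => (Finset.mem_filter.mp (hSsub hi)).2

lemma prob_count_ge {Ω : Type*} [MeasureSpace Ω] [IsProbabilityMeasure (ℙ : Measure Ω)]
    {n : ℕ} (X : Fin n → Ω → ℝ) (hmeas : ∀ i, Measurable (X i))
    (hindep : iIndepFun X ℙ)
    (hdist : ∀ i, Measure.map (X i) ℙ = gaussianReal 0 1)
    (k : ℕ) (t : ℝ) (q : ℝ≥0∞) (hq : gaussianReal 0 1 (Set.Ioi t) ≤ q) :
    ℙ {ω | k ≤ (Finset.univ.filter (fun i => t < X i ω)).card} ≤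
      (n.choose k : ℝ≥0∞) * q ^ k := by
  have hone : ∀ i, ℙ (X i ⁻¹' Set.Ioi t) ≤ q := by
    intro i
    rw [← Measure.map_apply (hmeas i) measurableSet_Ioi, hdist i]
    exact hq
  calc ℙ {ω | k ≤ (Finset.univ.filter (fun i => t < X i ω)).card}
      ≤ ℙ (⋃ S ∈ Finset.powersetCard k (Finset.univ : Finset (Fin n)),
          ⋂ i ∈ S, X i ⁻¹' Set.Ioi t) := by
        apply measure_mono
        exact count_ge_subset X t k
    _ ≤ ∑ S ∈ Finset.powersetCard k (Finset.univ : Finset (Fin n)),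
          ℙ (⋂ i ∈ S, X i ⁻¹' Set.Ioi t) := measure_biUnion_finset_le _ _
    _ ≤ ∑ S ∈ Finset.powersetCard k (Finset.univ : Finset (Fin n)), q ^ k := by
        apply Finset.sum_le_sum
        intro S hS
        have hcard : S.card = k := (Finset.mem_powersetCard.mp hS).2
        have heq : ℙ (⋂ i ∈ S, X i ⁻¹' Set.Ioi t) = ∏ i ∈ S, ℙ (X i ⁻¹' Set.Ioi t) := by
          apply hindep.meas_biInter
          intro i _
          exact ⟨Set.Ioi t, measurableSet_Ioi, rfl⟩
        rw [heq, ← hcard]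
        calc ∏ i ∈ S, ℙ (X i ⁻¹' Set.Ioi t) ≤ ∏ _i ∈ S, q :=
              Finset.prod_le_prod' fun i _ => hone i
          _ = q ^ S.card := Finset.prod_const q
    _ = (n.choose k : ℝ≥0∞) * q ^ k := by
        rw [Finset.sum_const, Finset.card_powersetCard, Finset.card_univ, Fintype.card_fin,
          nsmul_eq_mul]

lemma my_sqrt_add_le {x y : ℝ} (hx : 0 ≤ x) (hy : 0 ≤ y) :
    Real.sqrt (x + y) ≤ Real.sqrt x + Real.sqrt y := by
  have h : x + y ≤ (Real.sqrt x + Real.sqrt y)^2 := by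
    nlinarith [Real.sq_sqrt hx, Real.sq_sqrt hy, Real.sqrt_nonneg x, Real.sqrt_nonneg y]
  calc Real.sqrt (x+y) ≤ Real.sqrt ((Real.sqrt x + Real.sqrt y)^2) := Real.sqrt_le_sqrt h
    _ = Real.sqrt x + Real.sqrt y := Real.sqrt_sq (by positivity)

lemma telescope_sum (δ : ℝ) (hδ : 0 ≤ δ) :
    ∀ n : ℕ, ∑ k ∈ Finset.range n, δ / (((k:ℝ)+1) * ((k:ℝ)+2)) ≤ δ := by
  have key : ∀ n : ℕ, ∑ k ∈ Finset.range n, (1:ℝ) / (((k:ℝ)+1) * ((k:ℝ)+2)) = 1 - 1/((n:ℝ)+1) := by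
    intro n
    induction n with
    | zero => simp
    | succ m ih =>
      rw [Finset.sum_range_succ, ih]
      push_cast
      field_simp
      ring
  intro n
  have : ∑ k ∈ Finset.range n, δ / (((k:ℝ)+1) * ((k:ℝ)+2))
      = δ * ∑ k ∈ Finset.range n, (1:ℝ) / (((k:ℝ)+1) * ((k:ℝ)+2)) := by
    rw [Finset.mul_sum]
    refine Finset.sum_congr rfl fun k _ => ?_
    ring
  rw [this, key]
  have h1 : 1 - 1/((n:ℝ)+1) ≤ 1 := by
    have : 0 ≤ 1/((n:ℝ)+1) := by positivity
    linarith
  nlinarith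

noncomputable def tfun (L M NPr : ℝ) (k : ℕ) : ℝ :=
  Real.sqrt (2*L) + Real.sqrt (2*M) +
    Real.sqrt (2*Real.log (NPr/(k:ℝ)) + (2/(k:ℝ))*Real.log ((k:ℝ)*((k:ℝ)+1)))

lemma core_ineq (δ : ℝ) (NA k : ℕ) (t : ℝ) (hδ0 : 0 < δ) (hδ1 : δ < 1)
    (hk1 : 1 ≤ k) (hNA0 : 1 ≤ NA)
    (ht : 2*Real.log (1/δ) + 2*Real.log (Real.exp 1 * NA/(k:ℝ))
        + (2/(k:ℝ))*Real.log ((k:ℝ)*((k:ℝ)+1)) ≤ t^2) :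
    (NA.choose k : ℝ) * rexp (-t^2/2)^k ≤ δ/((k:ℝ)*((k:ℝ)+1)) := by
  have hkr : (0:ℝ) < k := by exact_mod_cast hk1
  have hNAr : (0:ℝ) < NA := by exact_mod_cast hNA0
  have hE : (0:ℝ) < rexp 1 * NA/(k:ℝ) := by positivity
  set A := Real.log (Real.exp 1 * NA/(k:ℝ)) with hA
  set B := Real.log (1/δ) with hB
  set Q := Real.log ((k:ℝ)*((k:ℝ)+1)) with hQ
  -- bound on the binomial coefficient
  have hchoose : (NA.choose k : ℝ) ≤ rexp (k*A) := by
    have h1 : (NA.choose k : ℝ) ≤ (NA:ℝ)^k / (Nat.factorial k : ℝ) :=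
      Nat.choose_le_pow_div k NA
    have h2 : (NA:ℝ)^k / (Nat.factorial k : ℝ) ≤ (rexp 1 * NA / (k:ℝ))^k := by
      rw [div_pow, div_le_div_iff₀ (by positivity) (by positivity)]
      have hp := pow_le_factorial_mul_exp k
      calc (NA:ℝ)^k * (k:ℝ)^k ≤ (NA:ℝ)^k * ((Nat.factorial k : ℝ) * rexp 1 ^ k) := by
            apply mul_le_mul_of_nonneg_left hp (by positivity)
        _ = (rexp 1 * NA)^k * (Nat.factorial k : ℝ) := by rw [mul_pow]; ring
    have h3 : (rexp 1 * NA / (k:ℝ))^k = rexp (k*A) := by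
      rw [hA, Real.exp_nat_mul, Real.exp_log hE]
    linarith
  have hexpk : rexp (-t^2/2)^k = rexp (k * (-t^2/2)) := (Real.exp_nat_mul _ k).symm
  have hprod : (NA.choose k : ℝ) * rexp (-t^2/2)^k ≤ rexp (k*A + k*(-t^2/2)) := by
    rw [hexpk, Real.exp_add]
    apply mul_le_mul_of_nonneg_right hchoose (Real.exp_nonneg _)
  have harith : k*A + k*(-t^2/2) ≤ -(k*B) - Q := by
    have hh := mul_le_mul_of_nonneg_left ht (show (0:ℝ) ≤ (k:ℝ)/2 by positivity)
    have hfact : ((k:ℝ)/2) * (2*B + 2*A + (2/(k:ℝ))*Q) = k*B + k*A + Q := by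
      field_simp
    nlinarith
  have hBδ : rexp (-B) = δ := by
    rw [hB, one_div, Real.log_inv, neg_neg, Real.exp_log hδ0]
  have hQv : rexp (-Q) = ((k:ℝ)*((k:ℝ)+1))⁻¹ := by
    rw [hQ, Real.exp_neg, Real.exp_log (by positivity)]
  calc (NA.choose k : ℝ) * rexp (-t^2/2)^k ≤ rexp (k*A + k*(-t^2/2)) := hprod
    _ ≤ rexp (-(k*B) - Q) := Real.exp_le_exp.mpr harith
    _ = rexp (-B)^k * rexp (-Q) := by
        rw [← Real.exp_nat_mul, ← Real.exp_add]
        congr 1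
        ring
    _ = δ^k * ((k:ℝ)*((k:ℝ)+1))⁻¹ := by rw [hBδ, hQv]
    _ ≤ δ^1 * ((k:ℝ)*((k:ℝ)+1))⁻¹ := by
        apply mul_le_mul_of_nonneg_right (pow_le_pow_of_le_one hδ0.le hδ1.le hk1) (by positivity)
    _ = δ/((k:ℝ)*((k:ℝ)+1)) := by rw [pow_one, div_eq_mul_inv]

lemma I2lemma (L M : ℝ) (NP : ℕ) (hL0 : 0 ≤ L) (hM1 : 1 ≤ M) (hNP1 : 1 ≤ NP) :
    (1/(NP:ℝ)) * ∑ k ∈ Finset.range NP, tfun L M (NP:ℝ) (k+1)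
      ≤ Real.sqrt (2*L) + Real.sqrt (2*M) + 3*Real.sqrt 2 := by
  have hNPr : (0:ℝ) < NP := by exact_mod_cast hNP1
  have hu0 : (0:ℝ) < Real.sqrt 2 := by positivity
  have hu2 : Real.sqrt 2 ^ 2 = 2 := Real.sq_sqrt (by norm_num)
  have h8 : Real.sqrt 8 = 2*Real.sqrt 2 := by
    rw [show (8:ℝ) = 2^2*2 by norm_num, Real.sqrt_mul (by positivity) 2,
      Real.sqrt_sq (by norm_num)]
  have hterm : ∀ k ∈ Finset.range NP, tfun L M (NP:ℝ) (k+1) ≤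
      Real.sqrt (2*L) + Real.sqrt (2*M) +
        ((Real.log ((NP:ℝ)/((k:ℝ)+1)) + 1)/Real.sqrt 2 + 2*Real.sqrt 2) := by
    intro k hk
    have hkNP : k + 1 ≤ NP := Finset.mem_range.mp hk
    have hK0 : (0:ℝ) < (k:ℝ)+1 := by positivity
    have hKNP : (k:ℝ)+1 ≤ (NP:ℝ) := by exact_mod_cast hkNP
    have hcast : ((k+1:ℕ):ℝ) = (k:ℝ)+1 := by push_cast; ring
    have htf : tfun L M (NP:ℝ) (k+1) = Real.sqrt (2*L) + Real.sqrt (2*M) +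
        Real.sqrt (2*Real.log ((NP:ℝ)/((k:ℝ)+1))
          + (2/((k:ℝ)+1))*Real.log (((k:ℝ)+1)*(((k:ℝ)+1)+1))) := by
      unfold tfun
      rw [hcast]
    rw [htf]
    have hP0 : 0 ≤ Real.log ((NP:ℝ)/((k:ℝ)+1)) :=
      Real.log_nonneg ((one_le_div hK0).mpr hKNP)
    have hQ0 : 0 ≤ Real.log (((k:ℝ)+1)*(((k:ℝ)+1)+1)) := Real.log_nonneg (by nlinarith)
    have hx0 : 0 ≤ 2*Real.log ((NP:ℝ)/((k:ℝ)+1)) := by linarith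
    have hy0 : 0 ≤ (2/((k:ℝ)+1))*Real.log (((k:ℝ)+1)*(((k:ℝ)+1)+1)) := by positivity
    have hsplit := my_sqrt_add_le hx0 hy0
    have h1 : Real.sqrt (2*Real.log ((NP:ℝ)/((k:ℝ)+1)))
        ≤ (Real.log ((NP:ℝ)/((k:ℝ)+1)) + 1)/Real.sqrt 2 := by
      rw [le_div_iff₀ hu0]
      have hs := sq_nonneg (Real.sqrt (2*Real.log ((NP:ℝ)/((k:ℝ)+1))) - Real.sqrt 2)
      have he1 : Real.sqrt (2*Real.log ((NP:ℝ)/((k:ℝ)+1)))^2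
          = 2*Real.log ((NP:ℝ)/((k:ℝ)+1)) := Real.sq_sqrt hx0
      nlinarith [Real.sqrt_nonneg (2*Real.log ((NP:ℝ)/((k:ℝ)+1)))]
    have h2 : Real.sqrt ((2/((k:ℝ)+1))*Real.log (((k:ℝ)+1)*(((k:ℝ)+1)+1)))
        ≤ 2*Real.sqrt 2 := by
      have hlog1 : Real.log ((k:ℝ)+1) ≤ (k:ℝ) := by
        have := Real.log_le_sub_one_of_pos hK0
        linarith
      have hlog2 : Real.log (((k:ℝ)+1)+1) ≤ (k:ℝ)+1 := by
        have := Real.log_le_sub_one_of_pos (show (0:ℝ) < ((k:ℝ)+1)+1 by positivity)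
        linarith
      have hmul : Real.log (((k:ℝ)+1)*(((k:ℝ)+1)+1))
          = Real.log ((k:ℝ)+1) + Real.log (((k:ℝ)+1)+1) :=
        Real.log_mul (by positivity) (by positivity)
      have hyle : (2/((k:ℝ)+1))*Real.log (((k:ℝ)+1)*(((k:ℝ)+1)+1)) ≤ 8 := by
        rw [hmul]
        rw [div_mul_eq_mul_div, div_le_iff₀ hK0]
        nlinarith
      calc Real.sqrt ((2/((k:ℝ)+1))*Real.log (((k:ℝ)+1)*(((k:ℝ)+1)+1)))
          ≤ Real.sqrt 8 := Real.sqrt_le_sqrt hyle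
        _ = 2*Real.sqrt 2 := h8
    linarith
  have hsum := sum_log_le NP
  have h2d : (1:ℝ)/Real.sqrt 2 = Real.sqrt 2/2 := by
    rw [div_eq_div_iff (ne_of_gt hu0) (two_ne_zero)]
    nlinarith
  have hre : ∀ k ∈ Finset.range NP, Real.sqrt (2*L) + Real.sqrt (2*M) +
      ((Real.log ((NP:ℝ)/((k:ℝ)+1)) + 1)/Real.sqrt 2 + 2*Real.sqrt 2)
      = (Real.sqrt (2*L) + Real.sqrt (2*M) + 1/Real.sqrt 2 + 2*Real.sqrt 2)
        + Real.log ((NP:ℝ)/((k:ℝ)+1)) * (1/Real.sqrt 2) := by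
    intro k _
    ring
  have hsumall : ∑ k ∈ Finset.range NP, tfun L M (NP:ℝ) (k+1)
      ≤ (NP:ℝ) * (Real.sqrt (2*L) + Real.sqrt (2*M) + 3*Real.sqrt 2) := by
    calc ∑ k ∈ Finset.range NP, tfun L M (NP:ℝ) (k+1)
        ≤ ∑ k ∈ Finset.range NP, (Real.sqrt (2*L) + Real.sqrt (2*M) +
          ((Real.log ((NP:ℝ)/((k:ℝ)+1)) + 1)/Real.sqrt 2 + 2*Real.sqrt 2)) :=
          Finset.sum_le_sum hterm
      _ = (NP:ℝ) * (Real.sqrt (2*L) + Real.sqrt (2*M) + 1/Real.sqrt 2 + 2*Real.sqrt 2)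
          + (∑ k ∈ Finset.range NP, Real.log ((NP:ℝ)/((k:ℝ)+1))) * (1/Real.sqrt 2) := by
          rw [Finset.sum_congr rfl hre, Finset.sum_add_distrib, Finset.sum_const,
            Finset.card_range, ← Finset.sum_mul, nsmul_eq_mul]
      _ ≤ (NP:ℝ) * (Real.sqrt (2*L) + Real.sqrt (2*M) + 1/Real.sqrt 2 + 2*Real.sqrt 2)
          + (NP:ℝ) * (1/Real.sqrt 2) := by
          apply add_le_add_right
          apply mul_le_mul_of_nonneg_right hsum (by positivity)
      _ = (NP:ℝ) * (Real.sqrt (2*L) + Real.sqrt (2*M) + 3*Real.sqrt 2) := by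
          rw [h2d]
          ring
  calc (1/(NP:ℝ)) * ∑ k ∈ Finset.range NP, tfun L M (NP:ℝ) (k+1)
      ≤ (1/(NP:ℝ)) * ((NP:ℝ) * (Real.sqrt (2*L) + Real.sqrt (2*M) + 3*Real.sqrt 2)) :=
        mul_le_mul_of_nonneg_left hsumall (by positivity)
    _ = Real.sqrt (2*L) + Real.sqrt (2*M) + 3*Real.sqrt 2 := by
        field_simp

/-- With probability at least `1 - δ`, the average of the `N_P` largest of `N_A` i.i.d.
standard Gaussians is at most `3√(2 log(1/δ)) + 7√(2 log(e N_A/N_P)) + π/(2 N_P)`. -/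
theorem stmt4 {Ω : Type*} [MeasureSpace Ω] [IsProbabilityMeasure (ℙ : Measure Ω)]
    (δ : ℝ) (hδ : δ ∈ Set.Ioo (0 : ℝ) 1)
    (NP NA : ℕ) (hNP : 1 ≤ NP) (hlt : NP < NA)
    (X : Fin NA → Ω → ℝ) (hmeas : ∀ i, Measurable (X i))
    (hindep : iIndepFun X ℙ)
    (hdist : ∀ i, Measure.map (X i) ℙ = gaussianReal 0 1) :
    ENNReal.ofReal (1 - δ) ≤
      ℙ {ω | topAvg NA NP (fun i => X i ω) ≤ 3 * Real.sqrt (2 * Real.log (1 / δ)) +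
        7 * Real.sqrt (2 * Real.log (Real.exp 1 * NA / NP)) + Real.pi / (2 * NP)} := by
  obtain ⟨hδ0, hδ1⟩ := hδ
  have hNA0 : 1 ≤ NA := by omega
  have hNPr : (0:ℝ) < NP := by exact_mod_cast hNP
  have hNAr : (0:ℝ) < NA := by exact_mod_cast hNA0
  set L := Real.log (1/δ) with hLdef
  set M := Real.log (Real.exp 1 * NA / NP) with hMdef
  have he1 : (1:ℝ) ≤ rexp 1 := by nlinarith [Real.add_one_le_exp (1:ℝ)]
  have hL0 : 0 ≤ L := by
    rw [hLdef]
    apply Real.log_nonneg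
    rw [le_div_iff₀ hδ0]
    linarith
  have hM1 : 1 ≤ M := by
    have hdiv : (1:ℝ) ≤ (NA:ℝ)/(NP:ℝ) := by
      rw [le_div_iff₀ hNPr]
      have : (NP:ℝ) ≤ (NA:ℝ) := by exact_mod_cast hlt.le
      linarith
    have h : rexp 1 ≤ rexp 1 * NA / NP := by
      rw [mul_div_assoc]
      nlinarith [Real.exp_pos 1]
    calc (1:ℝ) = Real.log (rexp 1) := (Real.log_exp 1).symm
      _ ≤ M := by rw [hMdef]; exact Real.log_le_log (Real.exp_pos 1) h
  have hM0 : 0 ≤ M := by linarith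
  set t : ℕ → ℝ := fun k => tfun L M (NP:ℝ) k with htdef
  -- threshold properties
  have ht1 : ∀ k : ℕ, 1 ≤ t k := by
    intro k
    have h1 : 1 ≤ Real.sqrt (2*M) := by
      rw [show (1:ℝ) = Real.sqrt 1 by simp]
      exact Real.sqrt_le_sqrt (by linarith)
    have h2 := Real.sqrt_nonneg (2*L)
    have h3 := Real.sqrt_nonneg (2*Real.log ((NP:ℝ)/(k:ℝ))
      + (2/(k:ℝ))*Real.log ((k:ℝ)*((k:ℝ)+1)))
    show 1 ≤ tfun L M (NP:ℝ) k
    unfold tfun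
    linarith
  -- the key per-k inequality
  have hI1 : ∀ k : ℕ, 1 ≤ k → k ≤ NP →
      (NA.choose k : ℝ) * rexp (-(t k)^2/2) ^ k ≤ δ/((k:ℝ)*((k:ℝ)+1)) := by
    intro k hk1 hkNP
    have hkr : (0:ℝ) < k := by exact_mod_cast hk1
    apply core_ineq δ NA k (t k) hδ0 hδ1 hk1 hNA0
    have hsplit : Real.log (rexp 1 * NA/(k:ℝ)) = M + Real.log ((NP:ℝ)/(k:ℝ)) := by
      rw [hMdef, ← Real.log_mul (by positivity) (by positivity)]
      congr 1
      field_simp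
    have hP0 : 0 ≤ Real.log ((NP:ℝ)/(k:ℝ)) := by
      apply Real.log_nonneg
      rw [le_div_iff₀ hkr]
      have : (k:ℝ) ≤ (NP:ℝ) := by exact_mod_cast hkNP
      linarith
    have hk1r : (1:ℝ) ≤ (k:ℝ) := by exact_mod_cast hk1
    have hQ0 : 0 ≤ Real.log ((k:ℝ)*((k:ℝ)+1)) := Real.log_nonneg (by nlinarith)
    have ha2 : Real.sqrt (2*L)^2 = 2*L := Real.sq_sqrt (by linarith)
    have hb2 : Real.sqrt (2*M)^2 = 2*M := Real.sq_sqrt (by linarith)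
    have hc2 : Real.sqrt (2*Real.log ((NP:ℝ)/(k:ℝ)) + (2/(k:ℝ))*Real.log ((k:ℝ)*((k:ℝ)+1)))^2
        = 2*Real.log ((NP:ℝ)/(k:ℝ)) + (2/(k:ℝ))*Real.log ((k:ℝ)*((k:ℝ)+1)) :=
      Real.sq_sqrt (by positivity)
    have htk : t k = Real.sqrt (2*L) + Real.sqrt (2*M)
        + Real.sqrt (2*Real.log ((NP:ℝ)/(k:ℝ)) + (2/(k:ℝ))*Real.log ((k:ℝ)*((k:ℝ)+1))) := rfl
    rw [hsplit, htk]
    nlinarith [Real.sqrt_nonneg (2*L), Real.sqrt_nonneg (2*M),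
      Real.sqrt_nonneg (2*Real.log ((NP:ℝ)/(k:ℝ)) + (2/(k:ℝ))*Real.log ((k:ℝ)*((k:ℝ)+1))),
      mul_nonneg (Real.sqrt_nonneg (2*L)) (Real.sqrt_nonneg (2*M)),
      mul_nonneg (Real.sqrt_nonneg (2*L)) (Real.sqrt_nonneg (2*Real.log ((NP:ℝ)/(k:ℝ))
        + (2/(k:ℝ))*Real.log ((k:ℝ)*((k:ℝ)+1)))),
      mul_nonneg (Real.sqrt_nonneg (2*M)) (Real.sqrt_nonneg (2*Real.log ((NP:ℝ)/(k:ℝ))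
        + (2/(k:ℝ))*Real.log ((k:ℝ)*((k:ℝ)+1))))]
  -- bad events
  set Bad : ℕ → Set Ω :=
    fun k => {ω | k ≤ (Finset.univ.filter (fun i => t k < X i ω)).card} with hBaddef
  have hBadP : ∀ k ∈ Finset.range NP,
      ℙ (Bad (k+1)) ≤ ENNReal.ofReal (δ/(((k:ℝ)+1)*((k:ℝ)+2))) := by
    intro k hk
    have hkNP : k + 1 ≤ NP := Finset.mem_range.mp hk
    calc ℙ (Bad (k+1))
        ≤ (NA.choose (k+1) : ℝ≥0∞) * (ENNReal.ofReal (rexp (-(t (k+1))^2/2)))^(k+1) :=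
          prob_count_ge X hmeas hindep hdist (k+1) (t (k+1)) _ (gauss_tail (ht1 (k+1)))
      _ = ENNReal.ofReal ((NA.choose (k+1) : ℝ) * rexp (-(t (k+1))^2/2)^(k+1)) := by
          rw [← ENNReal.ofReal_pow (Real.exp_nonneg _), ← ENNReal.ofReal_natCast (NA.choose (k+1)),
            ← ENNReal.ofReal_mul (by positivity)]
      _ ≤ ENNReal.ofReal (δ/(((k:ℝ)+1)*((k:ℝ)+2))) := by
          apply ENNReal.ofReal_le_ofReal
          have := hI1 (k+1) (by omega) hkNP
          push_cast at this ⊢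
          convert this using 3 <;> ring
  have hUnionP : ℙ (⋃ k ∈ Finset.range NP, Bad (k+1)) ≤ ENNReal.ofReal δ := by
    calc ℙ (⋃ k ∈ Finset.range NP, Bad (k+1))
        ≤ ∑ k ∈ Finset.range NP, ℙ (Bad (k+1)) := measure_biUnion_finset_le _ _
      _ ≤ ∑ k ∈ Finset.range NP, ENNReal.ofReal (δ/(((k:ℝ)+1)*((k:ℝ)+2))) :=
          Finset.sum_le_sum hBadP
      _ = ENNReal.ofReal (∑ k ∈ Finset.range NP, δ/(((k:ℝ)+1)*((k:ℝ)+2))) :=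
          (ENNReal.ofReal_sum_of_nonneg (fun k _ => by positivity)).symm
      _ ≤ ENNReal.ofReal δ := ENNReal.ofReal_le_ofReal (telescope_sum δ hδ0.le NP)
  -- the good event is contained in the target event
  have hGood : (⋃ k ∈ Finset.range NP, Bad (k+1))ᶜ ⊆
      {ω | topAvg NA NP (fun i => X i ω) ≤ 3 * Real.sqrt (2 * L) +
        7 * Real.sqrt (2 * M) + Real.pi / (2 * NP)} := by
    intro ω hω
    simp only [Set.mem_compl_iff, Set.mem_iUnion, not_exists, exists_prop] at hω
    have hω' : ∀ k, k ∈ Finset.range NP → ω ∉ Bad (k+1) := by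
      intro k hk hmem
      exact hω k ⟨hk, hmem⟩
    have hbound : ∀ i ∈ Finset.univ.filter (fun i : Fin NA => (i:ℕ) < NP),
        orderStatDesc (fun j => X j ω) i ≤ t ((i:ℕ)+1) := by
      intro i hi
      have hiNP : (i:ℕ) < NP := (Finset.mem_filter.mp hi).2
      by_contra hcon
      push_neg at hcon
      have hcount := orderStat_count (fun j => X j ω) (t ((i:ℕ)+1)) i hcon
      exact hω' (i:ℕ) (Finset.mem_range.mpr hiNP) hcount
    have hreindex : ∑ i ∈ Finset.univ.filter (fun i : Fin NA => (i:ℕ) < NP), t ((i:ℕ)+1)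
        = ∑ k ∈ Finset.range NP, t (k+1) := by
      apply Finset.sum_nbij' (i := fun i : Fin NA => (i:ℕ))
        (j := fun k : ℕ => (⟨min k (NA-1), by omega⟩ : Fin NA))
      · intro a ha
        exact Finset.mem_range.mpr (Finset.mem_filter.mp ha).2
      · intro a ha
        have hb := Finset.mem_range.mp ha
        simp only [Finset.mem_filter, Finset.mem_univ, true_and]
        show min a (NA-1) < NP
        omega
      · intro a ha
        have hb := (Finset.mem_filter.mp ha).2
        have h2 := a.isLt
        apply Fin.ext
        show min (a:ℕ) (NA-1) = (a:ℕ)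
        omega
      · intro a ha
        have hb := Finset.mem_range.mp ha
        show min a (NA-1) = a
        omega
      · intro a ha
        rfl
    show topAvg NA NP (fun i => X i ω) ≤ 3 * Real.sqrt (2 * L) +
        7 * Real.sqrt (2 * M) + Real.pi / (2 * NP)
    unfold topAvg
    have hsqrt2M : Real.sqrt 2 ≤ Real.sqrt (2*M) := Real.sqrt_le_sqrt (by linarith)
    have hsqa := Real.sqrt_nonneg (2*L)
    have hsqb := Real.sqrt_nonneg (2*M)
    have hpi : 0 < Real.pi / (2*NP) := by positivity
    calc (1/(NP:ℝ)) * ∑ i ∈ Finset.univ.filter (fun i : Fin NA => (i:ℕ) < NP),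
          orderStatDesc (fun j => X j ω) i
        ≤ (1/(NP:ℝ)) * ∑ i ∈ Finset.univ.filter (fun i : Fin NA => (i:ℕ) < NP), t ((i:ℕ)+1) :=
          mul_le_mul_of_nonneg_left (Finset.sum_le_sum hbound) (by positivity)
      _ = (1/(NP:ℝ)) * ∑ k ∈ Finset.range NP, t (k+1) := by rw [hreindex]
      _ ≤ Real.sqrt (2*L) + Real.sqrt (2*M) + 3*Real.sqrt 2 :=
          I2lemma L M NP hL0 hM1 hNP
      _ ≤ 3 * Real.sqrt (2 * L) + 7 * Real.sqrt (2 * M) + Real.pi / (2 * NP) := by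
          linarith
  -- conclude
  have hcover : (1:ℝ≥0∞) ≤ ℙ {ω | topAvg NA NP (fun i => X i ω) ≤ 3 * Real.sqrt (2 * L) +
      7 * Real.sqrt (2 * M) + Real.pi / (2 * NP)} + ℙ (⋃ k ∈ Finset.range NP, Bad (k+1)) := by
    have huniv : (Set.univ : Set Ω) ⊆
        {ω | topAvg NA NP (fun i => X i ω) ≤ 3 * Real.sqrt (2 * L) +
          7 * Real.sqrt (2 * M) + Real.pi / (2 * NP)} ∪ (⋃ k ∈ Finset.range NP, Bad (k+1)) := by
      intro ω _
      by_cases h : ω ∈ ⋃ k ∈ Finset.range NP, Bad (k+1)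
      · exact Or.inr h
      · exact Or.inl (hGood h)
    calc (1:ℝ≥0∞) = ℙ (Set.univ : Set Ω) := measure_univ.symm
      _ ≤ ℙ ({ω | topAvg NA NP (fun i => X i ω) ≤ 3 * Real.sqrt (2 * L) +
          7 * Real.sqrt (2 * M) + Real.pi / (2 * NP)} ∪ (⋃ k ∈ Finset.range NP, Bad (k+1))) :=
          measure_mono huniv
      _ ≤ _ := measure_union_le _ _
  have hfinal : ENNReal.ofReal (1-δ) + ENNReal.ofReal δ ≤
      ℙ {ω | topAvg NA NP (fun i => X i ω) ≤ 3 * Real.sqrt (2 * L) +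
        7 * Real.sqrt (2 * M) + Real.pi / (2 * NP)} + ENNReal.ofReal δ := by
    calc ENNReal.ofReal (1-δ) + ENNReal.ofReal δ = ENNReal.ofReal 1 := by
          rw [← ENNReal.ofReal_add (by linarith) hδ0.le]
          norm_num
      _ = (1:ℝ≥0∞) := by simp
      _ ≤ _ := le_trans hcover (add_le_add_right hUnionP _)
  have := (ENNReal.add_le_add_iff_right ENNReal.ofReal_ne_top).mp hfinal
  exact this
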